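/- For every x ∈ [0,1], the sequence of ordered graphs P(n,x) satisfies: the edge density of P(n,x) tends to x, and the density of the ordered path M (with edges 12 and 23) in P(n,x) tends to -(1/2)·η·(η² - 3) where η = 1 - sqrt(1-x). -/

import Mathlib

open Finset

-- The right-degree of vertex `i` in an ordered graph on `Fin n`:
-- the number of neighbors `j` with `i < j`.
open scoped Classical in
noncomputable def rdeg {n : ℕ} (G : SimpleGraph (Fin n)) (i : Fin n) : ℕ :=
  (Finset.univ.filter fun j => G.Adj i j ∧ i < j).card

-- The number of copies of the ordered left star `S_L(k)` in an ordered graph on `Fin n`: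
-- sets of `k+1` vertices whose minimum is adjacent to all the others.
open scoped Classical in
noncomputable def leftStarCount {n : ℕ} (G : SimpleGraph (Fin n)) (k : ℕ) : ℕ :=
  ((Finset.univ : Finset (Finset (Fin n))).filter fun s =>
    s.card = k + 1 ∧ ∃ v ∈ s, (∀ w ∈ s, v ≤ w) ∧ ∀ w ∈ s, w ≠ v → G.Adj v w).card

-- The number of edges of an ordered graph on `Fin n`.
open scoped Classical in
noncomputable def ecount {n : ℕ} (G : SimpleGraph (Fin n)) : ℕ :=
  (Finset.univ.filter fun p : Fin n × Fin n => p.1 < p.2 ∧ G.Adj p.1 p.2).card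

-- The number of copies of the ordered path `M` (edges 12, 23) in an ordered graph:
-- triples `v₁ < v₂ < v₃` with `v₁v₂` and `v₂v₃` edges.
open scoped Classical in
noncomputable def mcount {n : ℕ} (G : SimpleGraph (Fin n)) : ℕ :=
  (Finset.univ.filter fun t : Fin n × Fin n × Fin n =>
    t.1 < t.2.1 ∧ t.2.1 < t.2.2 ∧ G.Adj t.1 t.2.1 ∧ G.Adj t.2.1 t.2.2).card

-- Size of the middle part `B` of `P(n,x)`.
noncomputable def pB (n : ℕ) (x : ℝ) : ℕ := ⌊(n : ℝ) * (1 - Real.sqrt (1 - x))⌋₊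

-- Size of the first part `A` of `P(n,x)` (so that `||A| - |C|| ≤ 1`).
noncomputable def pA (n : ℕ) (x : ℝ) : ℕ := (n - pB n x) / 2

-- The ordered graph `P(n,x)` on `[n] = A ⊔ B ⊔ C` with all edges incident to `B`
-- (i.e. edge sets `A×B`, pairs within `B`, and `B×C`) and no other edges.
noncomputable def Pgraph (n : ℕ) (x : ℝ) : SimpleGraph (Fin n) :=
  SimpleGraph.fromRel fun v w =>
    (pA n x ≤ v.val ∧ v.val < pA n x + pB n x) ∨
    (pA n x ≤ w.val ∧ w.val < pA n x + pB n x)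

open Filter

open scoped Classical

lemma sum_ite_range (n : ℕ) (P : ℕ → Prop) [DecidablePred P] (f : ℕ → ℕ) (s : Finset ℕ)
    (hs : (Finset.range n).filter P = s) :
    (∑ k ∈ Finset.range n, if P k then f k else 0) = ∑ k ∈ s, f k := by
  rw [← hs, Finset.sum_filter]

lemma Pgraph_adj (n : ℕ) (x : ℝ) (v w : Fin n) : (Pgraph n x).Adj v w ↔
    v.val ≠ w.val ∧ ((pA n x ≤ v.val ∧ v.val < pA n x + pB n x) ∨
      (pA n x ≤ w.val ∧ w.val < pA n x + pB n x)) := by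
  rw [Pgraph, SimpleGraph.fromRel_adj, ne_eq, Fin.ext_iff]; tauto

lemma ecount_eq (n : ℕ) (x : ℝ) (hab : pA n x + pB n x ≤ n) :
    ecount (Pgraph n x) =
      (∑ l ∈ Finset.Ico (pA n x) (pA n x + pB n x), l) + pB n x * (n - (pA n x + pB n x)) := by
  set a := pA n x with ha
  set b := pB n x with hb
  rw [ecount, Finset.card_filter, Fintype.sum_prod_type]
  have step : ∀ i j : Fin n,
      (if (i < j ∧ (Pgraph n x).Adj i j) then 1 else 0) =
      ((if (i.val < j.val ∧ (a ≤ j.val ∧ j.val < a + b)) then 1 else 0) +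
       (if ((a ≤ i.val ∧ i.val < a + b) ∧ a + b ≤ j.val) then 1 else 0)) := by
    intro i j
    simp only [Pgraph_adj, Fin.lt_def, ← ha, ← hb]
    split_ifs <;> omega
  rw [Finset.sum_congr rfl (fun i _ => Finset.sum_congr rfl (fun j _ => step i j))]
  simp only [Finset.sum_add_distrib]
  rw [Finset.sum_comm]
  have e1 : ∀ j : Fin n, (∑ i : Fin n, if (i.val < j.val ∧ (a ≤ j.val ∧ j.val < a + b)) then 1 else 0)
      = if (a ≤ j.val ∧ j.val < a + b) then j.val else 0 := by
    intro j
    by_cases hB : a ≤ j.val ∧ j.val < a + b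
    · simp only [hB, and_true]
      rw [Fin.sum_univ_eq_sum_range (fun i => if i < j.val then 1 else 0) n,
        sum_ite_range n _ (fun _ => 1) (Finset.range j.val)
          (by ext k; simp only [mem_filter, mem_range]; omega)]
      simp [hB]
    · simp [hB]
  have e2 : ∀ i : Fin n, (∑ j : Fin n, if ((a ≤ i.val ∧ i.val < a + b) ∧ a + b ≤ j.val) then 1 else 0)
      = if (a ≤ i.val ∧ i.val < a + b) then n - (a+b) else 0 := by
    intro i
    by_cases hB : a ≤ i.val ∧ i.val < a + b
    · simp only [hB, true_and]
      rw [Fin.sum_univ_eq_sum_range (fun j => if a + b ≤ j then 1 else 0) n,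
        sum_ite_range n _ (fun _ => 1) (Finset.Ico (a+b) n)
          (by ext k; simp only [mem_filter, mem_range, mem_Ico]; omega)]
      simp [hB, Nat.card_Ico]
    · simp [hB]
  rw [Finset.sum_congr rfl (fun j _ => e1 j), Finset.sum_congr rfl (fun i _ => e2 i),
    Fin.sum_univ_eq_sum_range (fun j => if a ≤ j ∧ j < a + b then j else 0) n,
    Fin.sum_univ_eq_sum_range (fun i => if a ≤ i ∧ i < a + b then n - (a+b) else 0) n,
    sum_ite_range n _ _ (Finset.Ico a (a+b))
      (by ext k; simp only [mem_filter, mem_range, mem_Ico]; omega),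
    sum_ite_range n _ _ (Finset.Ico a (a+b))
      (by ext k; simp only [mem_filter, mem_range, mem_Ico]; omega),
    Finset.sum_const, Nat.card_Ico, smul_eq_mul]
  congr 1
  rw [Nat.add_sub_cancel_left, Nat.mul_comm]

lemma mcount_eq (n : ℕ) (x : ℝ) (hab : pA n x + pB n x ≤ n) :
    mcount (Pgraph n x) =
      ∑ l ∈ Finset.Ico (pA n x) (pA n x + pB n x), l * (n - (l+1)) := by
  set a := pA n x with ha
  set b := pB n x with hb
  rw [mcount, Finset.card_filter, Fintype.sum_prod_type]
  simp only [Fintype.sum_prod_type]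
  have step : ∀ i j k : Fin n,
      (if (i < j ∧ j < k ∧ (Pgraph n x).Adj i j ∧ (Pgraph n x).Adj j k) then 1 else 0) =
      (if (i.val < j.val ∧ (a ≤ j.val ∧ j.val < a + b) ∧ j.val < k.val) then (1:ℕ) else 0) := by
    intro i j k
    simp only [Pgraph_adj, Fin.lt_def, ← ha, ← hb]
    split_ifs <;> omega
  rw [Finset.sum_congr rfl fun i _ => Finset.sum_congr rfl fun j _ =>
    Finset.sum_congr rfl fun k _ => step i j k]
  have e3 : ∀ i j : Fin n,
      (∑ k : Fin n, if (i.val < j.val ∧ (a ≤ j.val ∧ j.val < a + b) ∧ j.val < k.val) then (1:ℕ) else 0)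
      = if (i.val < j.val ∧ (a ≤ j.val ∧ j.val < a + b)) then n - (j.val + 1) else 0 := by
    intro i j
    by_cases hP : i.val < j.val ∧ (a ≤ j.val ∧ j.val < a + b)
    · simp only [hP.1, hP.2, true_and, and_true]
      rw [Fin.sum_univ_eq_sum_range (fun k => if j.val < k then 1 else 0) n,
        sum_ite_range n _ (fun _ => 1) (Finset.Ico (j.val+1) n)
          (by ext m; simp only [mem_filter, mem_range, mem_Ico]; omega)]
      simp [hP, Nat.card_Ico]
    · rw [if_neg hP]
      refine Finset.sum_eq_zero fun k _ => ?_
      rw [if_neg (by tauto)]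
  rw [Finset.sum_congr rfl fun i _ => Finset.sum_congr rfl fun j _ => e3 i j,
    Finset.sum_comm]
  have e4 : ∀ j : Fin n,
      (∑ i : Fin n, if (i.val < j.val ∧ (a ≤ j.val ∧ j.val < a + b)) then n - (j.val + 1) else 0)
      = if (a ≤ j.val ∧ j.val < a + b) then j.val * (n - (j.val + 1)) else 0 := by
    intro j
    by_cases hB : a ≤ j.val ∧ j.val < a + b
    · simp only [hB, and_true]
      rw [Fin.sum_univ_eq_sum_range (fun i => if i < j.val then n - (j.val+1) else 0) n,
        sum_ite_range n _ _ (Finset.range j.val)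
          (by ext k; simp only [mem_filter, mem_range]; omega)]
      simp [hB, mul_comm]
    · rw [if_neg hB]
      refine Finset.sum_eq_zero fun i _ => ?_
      rw [if_neg (by tauto)]
  rw [Finset.sum_congr rfl fun j _ => e4 j,
    Fin.sum_univ_eq_sum_range (fun j => if a ≤ j ∧ j < a + b then j * (n - (j+1)) else 0) n,
    sum_ite_range n _ _ (Finset.Ico a (a+b))
      (by ext k; simp only [mem_filter, mem_range, mem_Ico]; omega)]

lemma sum_range_cast (m : ℕ) : (∑ k ∈ Finset.range m, (k:ℝ)) = m*((m:ℝ)-1)/2 := by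
  induction m with
  | zero => simp
  | succ m ih => rw [Finset.sum_range_succ, ih]; push_cast; ring

lemma sum_range_sq_cast (m : ℕ) :
    (∑ k ∈ Finset.range m, (k:ℝ)^2) = m*((m:ℝ)-1)*(2*(m:ℝ)-1)/6 := by
  induction m with
  | zero => simp
  | succ m ih => rw [Finset.sum_range_succ, ih]; push_cast; ring

lemma cast_choose_three (n : ℕ) : ((n.choose 3 : ℕ) : ℝ) = n*((n:ℝ)-1)*((n:ℝ)-2)/6 := by
  induction n with
  | zero => norm_num
  | succ n ih =>
      rw [Nat.choose_succ_succ']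
      push_cast
      rw [ih, Nat.cast_choose_two]
      push_cast
      ring

lemma pB_le (x : ℝ) (hx0 : 0 ≤ x) (n : ℕ) : pB n x ≤ n := by
  have hs : Real.sqrt (1-x) ≤ 1 := Real.sqrt_le_one.mpr (by linarith)
  have h0 : (0:ℝ) ≤ Real.sqrt (1-x) := Real.sqrt_nonneg _
  have : ((n:ℝ) * (1 - Real.sqrt (1-x))) ≤ (n:ℝ) := by
    nlinarith [Nat.cast_nonneg (α := ℝ) n]
  calc pB n x ≤ ⌊(n:ℝ)⌋₊ := Nat.floor_le_floor this
    _ = n := Nat.floor_natCast n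

lemma pAB_le (x : ℝ) (hx0 : 0 ≤ x) (n : ℕ) : pA n x + pB n x ≤ n := by
  have h1 := pB_le x hx0 n
  have h2 : (n - pB n x) / 2 ≤ n - pB n x := Nat.div_le_self _ _
  unfold pA at *
  omega

lemma tendsto_pB (x : ℝ) (hx0 : 0 ≤ x) (hx1 : x ≤ 1) :
    Tendsto (fun n : ℕ => (pB n x : ℝ) / n) atTop (nhds (1 - Real.sqrt (1-x))) := by
  set η := 1 - Real.sqrt (1-x) with hη
  have hη0 : 0 ≤ η := by
    have := Real.sqrt_le_one.mpr (show 1-x ≤ 1 by linarith); linarith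
  apply tendsto_of_tendsto_of_tendsto_of_le_of_le' (g := fun n : ℕ => η - 1/(n:ℝ))
      (h := fun _ : ℕ => η)
  · simpa using (tendsto_const_nhds (x := η)).sub tendsto_one_div_atTop_nhds_zero_nat
  · exact tendsto_const_nhds
  · filter_upwards [eventually_ge_atTop 1] with n hn
    have hnpos : (0:ℝ) < n := by exact_mod_cast hn
    have h := Nat.lt_floor_add_one ((n:ℝ) * η)
    have hfl : ((pB n x : ℕ) : ℝ) = (⌊(n:ℝ)*η⌋₊ : ℝ) := by rw [pB]
    rw [le_div_iff₀ hnpos, sub_mul, one_div, inv_mul_cancel₀ (ne_of_gt hnpos), hfl]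
    nlinarith
  · filter_upwards [eventually_ge_atTop 1] with n hn
    have hnpos : (0:ℝ) < n := by exact_mod_cast hn
    have h := Nat.floor_le (show (0:ℝ) ≤ (n:ℝ)*η by positivity)
    have hfl : ((pB n x : ℕ) : ℝ) = (⌊(n:ℝ)*η⌋₊ : ℝ) := by rw [pB]
    rw [div_le_iff₀ hnpos, hfl]
    nlinarith

lemma tendsto_pA (x : ℝ) (hx0 : 0 ≤ x) (hx1 : x ≤ 1) :
    Tendsto (fun n : ℕ => (pA n x : ℝ) / n) atTop (nhds ((1 - (1 - Real.sqrt (1-x)))/2)) := by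
  set η := 1 - Real.sqrt (1-x) with hη
  have hc : Tendsto (fun n : ℕ => ((n - pB n x : ℕ) : ℝ) / n) atTop (nhds (1 - η)) := by
    have := (tendsto_const_nhds (x := (1:ℝ)) (f := atTop (α := ℕ))).sub (tendsto_pB x hx0 hx1)
    apply Tendsto.congr' _ this
    filter_upwards [eventually_ge_atTop 1] with n hn
    have hnpos : (0:ℝ) < n := by exact_mod_cast hn
    rw [Nat.cast_sub (pB_le x hx0 n)]
    field_simp
  apply tendsto_of_tendsto_of_tendsto_of_le_of_le'
      (g := fun n : ℕ => ((n - pB n x : ℕ) : ℝ) / n / 2 - 1/(n:ℝ))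
      (h := fun n : ℕ => ((n - pB n x : ℕ) : ℝ) / n / 2)
  · simpa using (hc.div_const 2).sub tendsto_one_div_atTop_nhds_zero_nat
  · exact hc.div_const 2
  · filter_upwards [eventually_ge_atTop 1] with n hn
    have hnpos : (0:ℝ) < n := by exact_mod_cast hn
    set c := n - pB n x with hcdef
    have h1 : c ≤ 2 * (c/2) + 1 := by omega
    have h1r : (c:ℝ) ≤ 2 * ((c/2 : ℕ):ℝ) + 1 := by exact_mod_cast h1
    have hpa : pA n x = c/2 := rfl
    rw [hpa, div_div, sub_le_iff_le_add, ← add_div,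
      div_le_div_iff₀ (by positivity) hnpos]
    nlinarith
  · filter_upwards [eventually_ge_atTop 1] with n hn
    have hnpos : (0:ℝ) < n := by exact_mod_cast hn
    set c := n - pB n x with hcdef
    have h1 : 2 * (c/2) ≤ c := by omega
    have h1r : 2 * ((c/2 : ℕ):ℝ) ≤ (c:ℝ) := by exact_mod_cast h1
    have h2 : pA n x = c/2 := rfl
    rw [h2, div_div, div_le_div_iff₀ hnpos (by positivity)]
    nlinarith

noncomputable def f1 (p : ℝ × ℝ × ℝ) : ℝ :=
  (((p.1+p.2.1)*(p.1+p.2.1-p.2.2) - p.1*(p.1-p.2.2))/2 + p.2.1*(1-p.1-p.2.1)) / ((1-p.2.2)/2)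

noncomputable def f2 (p : ℝ × ℝ × ℝ) : ℝ :=
  ((1-p.2.2)*((p.1+p.2.1)*(p.1+p.2.1-p.2.2) - p.1*(p.1-p.2.2))/2
    - ((p.1+p.2.1)*(p.1+p.2.1-p.2.2)*(2*(p.1+p.2.1)-p.2.2) - p.1*(p.1-p.2.2)*(2*p.1-p.2.2))/6)
  / ((1-p.2.2)*(1-2*p.2.2)/6)


/-- The edge density of `P(n,x)` tends to `x` and the density of the ordered path `M`
in `P(n,x)` tends to `-(1/2)·η·(η² - 3)` with `η = 1 - √(1-x)`. -/
theorem Pgraph_densities (x : ℝ) (hx : x ∈ Set.Icc (0:ℝ) 1) :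
    Filter.Tendsto (fun n : ℕ => (ecount (Pgraph n x) : ℝ) / (n.choose 2 : ℝ))
      Filter.atTop (nhds x) ∧
    Filter.Tendsto (fun n : ℕ => (mcount (Pgraph n x) : ℝ) / (n.choose 3 : ℝ))
      Filter.atTop
      (nhds (-(1/2) * (1 - Real.sqrt (1 - x)) * ((1 - Real.sqrt (1 - x))^2 - 3))) := by
  obtain ⟨hx0, hx1⟩ := hx
  have hs2 : Real.sqrt (1-x) ^ 2 = 1 - x := Real.sq_sqrt (by linarith)
  set s := Real.sqrt (1-x) with hsdef
  set η := 1 - s with hηdef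
  have htuple : Tendsto (fun n : ℕ => ((pA n x : ℝ)/n, ((pB n x : ℝ)/n, 1/(n:ℝ))))
      atTop (nhds ((1-η)/2, (η, 0))) :=
    (tendsto_pA x hx0 hx1).prodMk_nhds
      ((tendsto_pB x hx0 hx1).prodMk_nhds tendsto_one_div_atTop_nhds_zero_nat)
  constructor
  · have hcont : ContinuousAt f1 ((1-η)/2, (η, 0)) := by
      apply ContinuousAt.div
      · fun_prop
      · fun_prop
      · norm_num
    have h1 := hcont.tendsto.comp htuple
    have val1 : f1 ((1-η)/2, (η, 0)) = x := by
      simp only [f1, hηdef]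
      field_simp
      nlinarith [hs2]
    rw [val1] at h1
    apply h1.congr'
    filter_upwards [eventually_ge_atTop 2] with n hn
    have hab := pAB_le x hx0 n
    have hn2 : (2:ℝ) ≤ (n:ℝ) := by exact_mod_cast hn
    have hn0 : (n:ℝ) ≠ 0 := by linarith
    have hn1 : (n:ℝ) - 1 ≠ 0 := by linarith
    simp only [Function.comp, f1]
    rw [ecount_eq n x hab, Nat.cast_choose_two]
    set a := pA n x with hadef
    set b := pB n x with hbdef
    have hsum : ((∑ l ∈ Finset.Ico a (a+b), l : ℕ) : ℝ)
        = (((a:ℝ)+(b:ℝ))*(((a:ℝ)+(b:ℝ))-1) - (a:ℝ)*((a:ℝ)-1))/2 := by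
      push_cast
      rw [Finset.sum_Ico_eq_sub _ (Nat.le_add_right a b), sum_range_cast, sum_range_cast]
      push_cast; ring
    rw [Nat.cast_add, hsum, Nat.cast_mul, Nat.cast_sub hab, Nat.cast_add]
    field_simp
    ring
  · have hcont : ContinuousAt f2 ((1-η)/2, (η, 0)) := by
      apply ContinuousAt.div
      · fun_prop
      · fun_prop
      · norm_num
    have h2 := hcont.tendsto.comp htuple
    have val2 : f2 ((1-η)/2, (η, 0)) = -(1/2) * η * (η^2 - 3) := by
      simp only [f2]
      norm_num
      ring
    rw [val2] at h2
    apply h2.congr'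
    filter_upwards [eventually_ge_atTop 3] with n hn
    have hab := pAB_le x hx0 n
    have hn3 : (3:ℝ) ≤ (n:ℝ) := by exact_mod_cast hn
    have hn0 : (n:ℝ) ≠ 0 := by linarith
    have hn1 : (n:ℝ) - 1 ≠ 0 := by linarith
    have hn2 : (n:ℝ) - 2 ≠ 0 := by linarith
    simp only [Function.comp, f2]
    rw [mcount_eq n x hab, cast_choose_three]
    set a := pA n x with hadef
    set b := pB n x with hbdef
    have hsum : ((∑ l ∈ Finset.Ico a (a+b), l * (n - (l+1)) : ℕ) : ℝ)
        = ((n:ℝ)-1) * ((((a:ℝ)+(b:ℝ))*(((a:ℝ)+(b:ℝ))-1) - (a:ℝ)*((a:ℝ)-1))/2)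
          - ((((a:ℝ)+(b:ℝ))*(((a:ℝ)+(b:ℝ))-1)*(2*((a:ℝ)+(b:ℝ))-1) - (a:ℝ)*((a:ℝ)-1)*(2*(a:ℝ)-1))/6) := by
      push_cast
      have hterm : ∀ l ∈ Finset.Ico a (a+b),
          ((l:ℝ) * ((n - (l+1) : ℕ) : ℝ)) = ((n:ℝ)-1)*(l:ℝ) - (l:ℝ)^2 := by
        intro l hl
        rw [Finset.mem_Ico] at hl
        have hl1 : l + 1 ≤ n := by omega
        rw [Nat.cast_sub hl1]
        push_cast; ring
      rw [Finset.sum_congr rfl hterm, Finset.sum_sub_distrib, ← Finset.mul_sum,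
        Finset.sum_Ico_eq_sub _ (Nat.le_add_right a b),
        Finset.sum_Ico_eq_sub (fun l => (l:ℝ)^2) (Nat.le_add_right a b),
        sum_range_cast, sum_range_cast, sum_range_sq_cast, sum_range_sq_cast]
      push_cast; ring
    rw [hsum]
    field_simp
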